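/- Let G be a connected simple graph on n ≥ 6 vertices whose Laplacian matrix L(G) has a nonzero eigenvalue α with multiplicity n − m, where 1 ≤ m ≤ n − 2, and let M be any principal submatrix of L(G) of order m + 2, indexed by a set S of m + 2 vertices. Then for every vertex k ∈ S there exists a nonzero vector z ∈ ℝ^{S} with Mz = αz, z_k = 0, and Σ_{i∈S} z_i = 0. -/

import Mathlib

open scoped Matrix

section Aux
open Polynomial Matrix

lemma charpoly_conj_aux {n R : Type*} [Fintype n] [DecidableEq n] [CommRing R]
    (P Q M : Matrix n n R) (hPQ : P * Q = 1) :
    (P * M * Q).charpoly = M.charpoly := by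
  have hmap : P.map (C : R →+* R[X]) * Q.map (C : R →+* R[X]) = 1 := by
    rw [← Matrix.map_mul, hPQ]
    simp
  have key : charmatrix (P * M * Q) =
      P.map (C : R →+* R[X]) * charmatrix M * Q.map (C : R →+* R[X]) := by
    unfold charmatrix
    rw [RingHom.mapMatrix_apply, RingHom.mapMatrix_apply, Matrix.map_mul, Matrix.map_mul,
      mul_sub, sub_mul]
    congr 1
    calc (Matrix.scalar n (X : R[X]))
        = Matrix.scalar n (X : R[X]) * (P.map (C : R →+* R[X]) * Q.map (C : R →+* R[X])) := by
          rw [hmap, mul_one]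
      _ = P.map (C : R →+* R[X]) * Matrix.scalar n (X : R[X]) * Q.map (C : R →+* R[X]) := by
          rw [← mul_assoc, (Matrix.scalar_commute (X : R[X]) (fun r => Commute.all _ _)
            (P.map (C : R →+* R[X]))).eq]
  have hdet : (P.map (C : R →+* R[X])).det * (Q.map (C : R →+* R[X])).det = 1 := by
    rw [← Matrix.det_mul, hmap, Matrix.det_one]
  rw [Matrix.charpoly, Matrix.charpoly, key, Matrix.det_mul, Matrix.det_mul]
  rw [mul_right_comm, hdet, one_mul]

lemma herm_charpoly {N : ℕ} (A : Matrix (Fin N) (Fin N) ℝ) (hA : A.IsHermitian) :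
    A.charpoly = ∏ i, (X - C (hA.eigenvalues i)) := by
  have hU : (hA.eigenvectorUnitary : Matrix (Fin N) (Fin N) ℝ) *
      star (hA.eigenvectorUnitary : Matrix (Fin N) (Fin N) ℝ) = 1 :=
    (Matrix.mem_unitaryGroup_iff).mp hA.eigenvectorUnitary.2
  conv_lhs => rw [hA.spectral_theorem, Unitary.conjStarAlgAut_apply]
  rw [mul_assoc, ← mul_assoc, charpoly_conj_aux _ _ _ hU,
    charpoly_of_upperTriangular _ (blockTriangular_diagonal _)]
  simp

lemma herm_rootMult {N : ℕ} (A : Matrix (Fin N) (Fin N) ℝ) (hA : A.IsHermitian) (α : ℝ) :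
    A.charpoly.rootMultiplicity α = (Finset.univ.filter (fun i => hA.eigenvalues i = α)).card := by
  rw [← Polynomial.count_roots, herm_charpoly A hA]
  have : (∏ i, (X - C (hA.eigenvalues i))) =
      ((Finset.univ.val.map hA.eigenvalues).map (fun a => X - C a)).prod := by
    rw [Multiset.map_map, Finset.prod]
    rfl
  rw [this, roots_multiset_prod_X_sub_C, Multiset.count_map]
  simp [Finset.card_filter, Finset.filter, eq_comm]

end Aux

open Polynomial Matrix in
/-- Let `G` be a connected simple graph on `n ≥ 6` vertices whose Laplacian
matrix `L(G)` has a nonzero eigenvalue `α` with multiplicity `n − m`, where `1 ≤ m ≤ n − 2`,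
and let `M` be any principal submatrix of `L(G)` of order `m + 2`, indexed by a set `S` of
`m + 2` vertices. Then for every vertex `k ∈ S` there exists a nonzero vector `z ∈ ℝ^S`
with `M z = α z`, `z_k = 0`, and `∑_{i ∈ S} z_i = 0`. -/
theorem principal_submatrix_eigenvector_vanishing_coordinate
    (n m : ℕ) (hn : 6 ≤ n) (hm : 1 ≤ m) (hmn : m ≤ n - 2)
    (G : SimpleGraph (Fin n)) [DecidableRel G.Adj] (hconn : G.Connected)
    (α : ℝ) (hα : α ≠ 0)
    (hmult : (G.lapMatrix ℝ).charpoly.rootMultiplicity α = n - m)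
    (S : Finset (Fin n)) (hS : S.card = m + 2)
    (k : Fin n) (hk : k ∈ S) :
    ∃ z : {x // x ∈ S} → ℝ, z ≠ 0 ∧
      ((G.lapMatrix ℝ).submatrix (fun i : {x // x ∈ S} => (i : Fin n))
          (fun j : {x // x ∈ S} => (j : Fin n))) *ᵥ z = α • z ∧
      z ⟨k, hk⟩ = 0 ∧ ∑ i, z i = 0 := by
  classical
  set L : Matrix (Fin n) (Fin n) ℝ := G.lapMatrix ℝ with hLdef
  have hL : L.IsHermitian := (G.posSemidef_lapMatrix ℝ).1
  have hm2n : m + 2 ≤ n := by omega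
  -- the eigenvalue index set
  set T : Finset (Fin n) := Finset.univ.filter (fun i => hL.eigenvalues i = α) with hTdef
  have hT : T.card = n - m := by rw [hTdef, ← herm_rootMult L hL α, hmult]
  -- the eigenspace
  set E : Submodule ℝ (Fin n → ℝ) :=
    LinearMap.ker (L.mulVecLin - α • LinearMap.id) with hEdef
  have hmemE : ∀ x : Fin n → ℝ, x ∈ E ↔ L *ᵥ x = α • x := by
    intro x
    simp [hEdef, LinearMap.mem_ker, sub_eq_zero]
  -- eigenvectors indexed by T
  set v : {i // i ∈ T} → (Fin n → ℝ) := fun i => ⇑(hL.eigenvectorBasis i) with hvdef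
  have hvE : ∀ i, v i ∈ E := by
    intro i
    rw [hmemE]
    have h2 : hL.eigenvalues i.1 = α := (Finset.mem_filter.mp i.2).2
    show L *ᵥ ⇑(hL.eigenvectorBasis i.1) = α • ⇑(hL.eigenvectorBasis i.1)
    rw [hL.mulVec_eigenvectorBasis, h2]
  have hvind : LinearIndependent ℝ v := by
    have h1 : LinearIndependent ℝ (fun i : Fin n => ⇑(hL.eigenvectorBasis i)) := by
      have := hL.eigenvectorBasis.toBasis.linearIndependent
      exact this.map' (WithLp.linearEquiv 2 ℝ (Fin n → ℝ)).toLinearMap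
        (LinearEquiv.ker _)
    exact h1.comp (fun i : {i // i ∈ T} => (i : Fin n)) Subtype.val_injective
  have hrankE : n - m ≤ Module.finrank ℝ E := by
    have hle : Submodule.span ℝ (Set.range v) ≤ E := by
      rw [Submodule.span_le]
      rintro _ ⟨i, rfl⟩
      exact hvE i
    have := finrank_span_eq_card hvind
    rw [Fintype.card_coe, hT] at this
    calc n - m = Module.finrank ℝ (Submodule.span ℝ (Set.range v)) := this.symm
      _ ≤ Module.finrank ℝ E := Submodule.finrank_mono hle
  -- the constraint set
  set F : Finset (Fin n) := insert k Sᶜ with hFdef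
  have hkc : k ∉ Sᶜ := by simp [hk]
  have hF : F.card = n - m - 1 := by
    rw [hFdef, Finset.card_insert_of_notMem hkc, Finset.card_compl, Fintype.card_fin, hS]
    omega
  -- constraint map
  set ψ : E →ₗ[ℝ] ({i // i ∈ F} → ℝ) :=
    (LinearMap.funLeft ℝ ℝ (fun i : {i // i ∈ F} => (i : Fin n))).comp E.subtype with hψdef
  have hker : LinearMap.ker ψ ≠ ⊥ := by
    intro hbot
    have h1 := LinearMap.finrank_range_add_finrank_ker ψ
    have h2 : Module.finrank ℝ (LinearMap.range ψ) ≤ n - m - 1 := by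
      calc Module.finrank ℝ (LinearMap.range ψ) ≤ Module.finrank ℝ ({i // i ∈ F} → ℝ) :=
            (LinearMap.range ψ).finrank_le
        _ = F.card := by rw [Module.finrank_fintype_fun_eq_card, Fintype.card_coe]
        _ = n - m - 1 := hF
    rw [hbot, finrank_bot, add_zero] at h1
    omega
  obtain ⟨x, hxker, hx0⟩ := Submodule.exists_mem_ne_zero_of_ne_bot hker
  have hxF : ∀ i : Fin n, i ∈ F → (x : Fin n → ℝ) i = 0 := by
    intro i hi
    have := LinearMap.mem_ker.mp hxker
    exact congrFun this ⟨i, hi⟩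
  have hxoff : ∀ i : Fin n, i ∉ S → (x : Fin n → ℝ) i = 0 := fun i hi =>
    hxF i (by simp [hFdef, hi])
  have hxk : (x : Fin n → ℝ) k = 0 := hxF k (by simp [hFdef])
  have hxE : L *ᵥ (x : Fin n → ℝ) = α • (x : Fin n → ℝ) := (hmemE _).mp x.2
  -- construct z
  refine ⟨fun i => (x : Fin n → ℝ) i.1, ?_, ?_, hxk, ?_⟩
  · intro hz
    apply hx0
    have : (x : Fin n → ℝ) = 0 := by
      funext i
      by_cases hi : i ∈ S
      · exact congrFun hz ⟨i, hi⟩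
      · exact hxoff i hi
    exact Subtype.ext this
  · funext i
    show ∑ j : {j // j ∈ S}, L i.1 j.1 * (x : Fin n → ℝ) j.1 = α * (x : Fin n → ℝ) i.1
    have hsum : ∑ j : {j // j ∈ S}, L i.1 j.1 * (x : Fin n → ℝ) j.1
        = ∑ j : Fin n, L i.1 j * (x : Fin n → ℝ) j := by
      rw [Finset.sum_coe_sort S (fun j => L i.1 j * (x : Fin n → ℝ) j)]
      apply Finset.sum_subset (Finset.subset_univ S)
      intro j _ hj
      rw [hxoff j hj, mul_zero]
    rw [hsum]
    have := congrFun hxE i.1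
    simpa [Matrix.mulVec, dotProduct] using this
  · show ∑ i : {i // i ∈ S}, (x : Fin n → ℝ) i.1 = 0
    have hsum : ∑ i : {i // i ∈ S}, (x : Fin n → ℝ) i.1 = ∑ i : Fin n, (x : Fin n → ℝ) i := by
      rw [Finset.sum_coe_sort S (fun i => (x : Fin n → ℝ) i)]
      apply Finset.sum_subset (Finset.subset_univ S)
      intro j _ hj
      exact hxoff j hj
    rw [hsum]
    have htot : α * ∑ i : Fin n, (x : Fin n → ℝ) i = 0 := by
      have h1 : ∑ i : Fin n, (L *ᵥ (x : Fin n → ℝ)) i = α * ∑ i, (x : Fin n → ℝ) i := by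
        rw [hxE]
        simp [Finset.mul_sum]
      have h2 : ∑ i : Fin n, (L *ᵥ (x : Fin n → ℝ)) i = 0 := by
        have hcol : ∀ j : Fin n, ∑ i : Fin n, L i j = 0 := by
          intro j
          have hsym : L.IsSymm := G.isSymm_lapMatrix (R := ℝ)
          have hrow := congrFun (G.lapMatrix_mulVec_const_eq_zero (R := ℝ)) j
          simp only [Matrix.mulVec, dotProduct, mul_one, Pi.zero_apply] at hrow
          calc ∑ i : Fin n, L i j = ∑ i : Fin n, L j i := by
                refine Finset.sum_congr rfl fun i _ => ?_
                rw [← hsym.apply i j]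
            _ = 0 := hrow
        calc ∑ i : Fin n, (L *ᵥ (x : Fin n → ℝ)) i
            = ∑ i : Fin n, ∑ j : Fin n, L i j * (x : Fin n → ℝ) j := rfl
          _ = ∑ j : Fin n, (∑ i : Fin n, L i j) * (x : Fin n → ℝ) j := by
              rw [Finset.sum_comm]
              simp [Finset.sum_mul]
          _ = 0 := by simp [hcol]
      rw [← h1, h2]
    exact (mul_eq_zero.mp htot).resolve_left hα
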